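/- Let S and X_1, …, X_N be random variables on a common probability space taking values in finite sets, and let B and Z be disjoint subsets of {1, …, N}. If H(S | X_{B∪Z}) = 0 (the variables indexed by B∪Z determine S) and H(S | X_Z) = H(S) (the variables indexed by Z are independent of S in the entropy sense), then H(S) ≤ H(X_B | X_Z), and consequently H(S) ≤ H(X_B). -/
import Mathlib


open Finset

/-- The probability that the random variable `X` takes the value `a`, under the
probability mass function `p` on the finite sample space `Ω`. -/
noncomputable def probOf {Ω : Type*} [Fintype Ω] (p : Ω → ℝ) {A : Type*} [DecidableEq A]
    (X : Ω → A) (a : A) : ℝ :=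
  ∑ ω ∈ Finset.univ.filter fun ω => X ω = a, p ω

/-- Shannon entropy of the random variable `X` with logarithm base `b`. -/
noncomputable def entropy {Ω : Type*} [Fintype Ω] (b : ℝ) (p : Ω → ℝ) {A : Type*}
    [Fintype A] [DecidableEq A] (X : Ω → A) : ℝ :=
  -∑ a : A, probOf p X a * Real.logb b (probOf p X a)

/-- Conditional Shannon entropy `H(X | Y)` with logarithm base `b`,
defined by the chain rule `H(X | Y) = H(X, Y) - H(Y)`. -/
noncomputable def condEntropy {Ω : Type*} [Fintype Ω] (b : ℝ) (p : Ω → ℝ) {A B : Type*}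
    [Fintype A] [DecidableEq A] [Fintype B] [DecidableEq B] (X : Ω → A) (Y : Ω → B) : ℝ :=
  entropy b p (fun ω => (X ω, Y ω)) - entropy b p Y

/-- The tuple `X_A = (X_i)_{i ∈ A}` of a family of random variables. -/
def tupleOn {Ω : Type*} {N : ℕ} {V : Fin N → Type*} (X : ∀ i, Ω → V i) (A : Finset (Fin N)) :
    Ω → ∀ i : A, V i :=
  fun ω i => X i ω

section helpers
variable {Ω : Type*} [Fintype Ω] {p : Ω → ℝ}

lemma probOf_nonneg (hp : ∀ ω, 0 ≤ p ω) {A : Type*} [DecidableEq A] (X : Ω → A) (a : A) :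
    0 ≤ probOf p X a :=
  Finset.sum_nonneg fun ω _ => hp ω

lemma sum_probOf {A : Type*} [Fintype A] [DecidableEq A] (X : Ω → A) :
    ∑ a : A, probOf p X a = ∑ ω, p ω := by
  unfold probOf
  exact Finset.sum_fiberwise _ _ _

lemma probOf_comp {A A' : Type*} [Fintype A] [DecidableEq A] [DecidableEq A'] (f : A → A') (X : Ω → A)
    (c : A') :
    probOf p (fun ω => f (X ω)) c = ∑ a ∈ Finset.univ.filter (fun a => f a = c), probOf p X a := by
  unfold probOf
  rw [Finset.sum_fiberwise_eq_sum_filter]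
  apply Finset.sum_congr
  · ext ω; simp
  · intros; rfl

lemma probOf_fst {A C : Type*} [Fintype A] [DecidableEq A] [Fintype C] [DecidableEq C]
    (X : Ω → A) (Y : Ω → C) (a : A) :
    probOf p X a = ∑ c : C, probOf p (fun ω => (X ω, Y ω)) (a, c) := by
  unfold probOf
  rw [← Finset.sum_fiberwise (Finset.univ.filter fun ω => X ω = a) Y p]
  apply Finset.sum_congr rfl
  intro c _
  apply Finset.sum_congr
  · ext ω; simp [Prod.ext_iff, and_comm]
  · intros; rfl

lemma probOf_snd {A C : Type*} [Fintype A] [DecidableEq A] [Fintype C] [DecidableEq C]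
    (X : Ω → A) (Y : Ω → C) (c : C) :
    probOf p Y c = ∑ a : A, probOf p (fun ω => (X ω, Y ω)) (a, c) := by
  unfold probOf
  rw [← Finset.sum_fiberwise (Finset.univ.filter fun ω => Y ω = c) X p]
  apply Finset.sum_congr rfl
  intro a _
  apply Finset.sum_congr
  · ext ω; simp [Prod.ext_iff, and_comm]
  · intros; rfl

end helpers

section entropyLemmas
variable {Ω : Type*} [Fintype Ω] {p : Ω → ℝ}

lemma le_probOf_comp (hp : ∀ ω, 0 ≤ p ω) {A A' : Type*} [Fintype A] [DecidableEq A]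
    [DecidableEq A'] (f : A → A') (X : Ω → A) (a : A) :
    probOf p X a ≤ probOf p (fun ω => f (X ω)) (f a) := by
  rw [probOf_comp f X]
  exact Finset.single_le_sum (fun a' _ => probOf_nonneg hp X a') (by simp)

lemma entropy_comp_le {b : ℝ} (hb : 1 < b) (hp : ∀ ω, 0 ≤ p ω)
    {A A' : Type*} [Fintype A] [DecidableEq A] [Fintype A'] [DecidableEq A']
    (f : A → A') (X : Ω → A) :
    entropy b p (fun ω => f (X ω)) ≤ entropy b p X := by
  unfold entropy
  rw [neg_le_neg_iff]
  calc ∑ a, probOf p X a * Real.logb b (probOf p X a)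
      ≤ ∑ a, probOf p X a * Real.logb b (probOf p (fun ω => f (X ω)) (f a)) := by
        apply Finset.sum_le_sum
        intro a _
        rcases (probOf_nonneg hp X a).eq_or_lt with h | h
        · rw [← h]; simp
        · exact mul_le_mul_of_nonneg_left
            (Real.logb_le_logb_of_le hb h (le_probOf_comp hp f X a)) h.le
    _ = ∑ c, probOf p (fun ω => f (X ω)) c * Real.logb b (probOf p (fun ω => f (X ω)) c) := by
        rw [← Finset.sum_fiberwise Finset.univ f
          (fun a => probOf p X a * Real.logb b (probOf p (fun ω => f (X ω)) (f a)))]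
        apply Finset.sum_congr rfl
        intro c _
        rw [probOf_comp f X, Finset.sum_mul]
        apply Finset.sum_congr rfl
        intro a ha
        rw [(Finset.mem_filter.1 ha).2, probOf_comp f X]

lemma entropy_comp_inj {b : ℝ} {A A' : Type*} [Fintype A] [DecidableEq A] [Fintype A']
    [DecidableEq A'] {f : A → A'} (hf : Function.Injective f) (X : Ω → A) :
    entropy b p (fun ω => f (X ω)) = entropy b p X := by
  unfold entropy
  congr 1
  rw [← Finset.sum_subset (Finset.subset_univ (Finset.univ.image f))]
  · rw [Finset.sum_image (fun a _ a' _ h => hf h)]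
    apply Finset.sum_congr rfl
    intro a _
    have h1 : probOf p (fun ω => f (X ω)) (f a) = probOf p X a := by
      rw [probOf_comp f X,
        show Finset.univ.filter (fun a' => f a' = f a) = {a} by ext a'; simp [hf.eq_iff]]
      simp
    rw [h1]
  · intro c _ hc
    have h0 : probOf p (fun ω => f (X ω)) c = 0 := by
      rw [probOf_comp f X,
        show Finset.univ.filter (fun a => f a = c) = ∅ by
          rw [Finset.filter_eq_empty_iff]
          intro a _ h
          exact hc (Finset.mem_image.2 ⟨a, Finset.mem_univ a, h⟩)]
      simp
    rw [h0]; simp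

lemma entropy_pair_le {b : ℝ} (hb : 1 < b) (hp : ∀ ω, 0 ≤ p ω) (hp1 : ∑ ω, p ω = 1)
    {A C : Type*} [Fintype A] [DecidableEq A] [Fintype C] [DecidableEq C]
    (X : Ω → A) (Y : Ω → C) :
    entropy b p (fun ω => (X ω, Y ω)) ≤ entropy b p X + entropy b p Y := by
  have hlb : 0 < Real.log b := Real.log_pos hb
  set s := probOf p (fun ω => (X ω, Y ω)) with hsdef
  set q := probOf p X with hqdef
  set r := probOf p Y with hrdef
  have hsnn : ∀ ac, 0 ≤ s ac := probOf_nonneg hp _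
  have hsq : ∀ a c, s (a, c) ≤ q a := by
    intro a c
    rw [hqdef, probOf_fst X Y a]
    exact Finset.single_le_sum (fun c' _ => hsnn (a, c')) (Finset.mem_univ c)
  have hsr : ∀ a c, s (a, c) ≤ r c := by
    intro a c
    rw [hrdef, probOf_snd X Y c]
    exact Finset.single_le_sum (fun a' _ => hsnn (a', c)) (Finset.mem_univ a)
  unfold entropy
  rw [← neg_add, neg_le_neg_iff]
  have hq : ∑ a, q a * Real.logb b (q a) = ∑ ac : A × C, s ac * Real.logb b (q ac.1) := by
    rw [Fintype.sum_prod_type]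
    apply Finset.sum_congr rfl
    intro a _
    rw [show q a * Real.logb b (q a) = (∑ c, s (a, c)) * Real.logb b (q a) by
      rw [← probOf_fst X Y a], Finset.sum_mul]
  have hr : ∑ c, r c * Real.logb b (r c) = ∑ ac : A × C, s ac * Real.logb b (r ac.2) := by
    rw [Fintype.sum_prod_type, Finset.sum_comm]
    apply Finset.sum_congr rfl
    intro c _
    rw [show r c * Real.logb b (r c) = (∑ a, s (a, c)) * Real.logb b (r c) by
      rw [← probOf_snd X Y c], Finset.sum_mul]
  have key : ∀ (x u v : ℝ), 0 ≤ x → x ≤ u → x ≤ v →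
      (x - u * v) / Real.log b ≤
        x * Real.logb b x - (x * Real.logb b u + x * Real.logb b v) := by
    intro x u v hx hxu hxv
    rcases hx.eq_or_lt with h | h
    · rw [← h]
      simp only [zero_mul, zero_sub, sub_zero, add_zero, zero_add, sub_self]
      have : 0 ≤ u * v := mul_nonneg (hx.trans hxu) (hx.trans hxv)
      apply div_nonpos_of_nonpos_of_nonneg <;> nlinarith
    · have hu : 0 < u := h.trans_le hxu
      have hv : 0 < v := h.trans_le hxv
      have huv : 0 < u * v / x := by positivity
      have h1 : Real.log (u * v / x) ≤ u * v / x - 1 := Real.log_le_sub_one_of_pos huv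
      have h2 : Real.log (u * v / x) = Real.log u + Real.log v - Real.log x := by
        rw [Real.log_div (by positivity) h.ne', Real.log_mul hu.ne' hv.ne']
      have h3 : x * (Real.log u + Real.log v - Real.log x) ≤ u * v - x := by
        rw [← h2]
        have := mul_le_mul_of_nonneg_left h1 h.le
        calc x * Real.log (u * v / x) ≤ x * (u * v / x - 1) := this
          _ = u * v - x := by field_simp
      have hfin : (x * Real.log x - (x * Real.log u + x * Real.log v)) / Real.log b
          = x * Real.logb b x - (x * Real.logb b u + x * Real.logb b v) := by
        simp only [Real.logb]; ring
      rw [← hfin]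
      exact div_le_div_of_nonneg_right (by nlinarith [h3]) hlb.le
  have sum_eq : ∑ ac : A × C, (s ac - q ac.1 * r ac.2) / Real.log b = 0 := by
    rw [← Finset.sum_div, Finset.sum_sub_distrib]
    have h1 : ∑ ac : A × C, s ac = 1 := by rw [hsdef, sum_probOf, hp1]
    have h2 : ∑ ac : A × C, q ac.1 * r ac.2 = 1 := by
      rw [Fintype.sum_prod_type]
      simp only [← Finset.mul_sum]
      rw [← Finset.sum_mul]
      rw [hqdef, hrdef, sum_probOf, sum_probOf, hp1, one_mul]
    rw [h1, h2]
    simp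
  have main : 0 ≤ ∑ ac : A × C,
      (s ac * Real.logb b (s ac) - (s ac * Real.logb b (q ac.1) + s ac * Real.logb b (r ac.2))) := by
    rw [← sum_eq]
    apply Finset.sum_le_sum
    intro ac _
    exact key (s ac) (q ac.1) (r ac.2) (hsnn ac) (hsq ac.1 ac.2) (hsr ac.1 ac.2)
  rw [Finset.sum_sub_distrib, Finset.sum_add_distrib] at main
  linarith [hq, hr, main]

end entropyLemmas

/-- Restriction of a function on `B ∪ Z` to the pair of its restrictions to `B` and `Z`. -/
def restrictPair {N : ℕ} {V : Fin N → Type*} (B Z : Finset (Fin N))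
    (v : ∀ i : (B ∪ Z : Finset (Fin N)), V i) : (∀ i : B, V i) × (∀ i : Z, V i) :=
  (fun i => v ⟨i.1, Finset.mem_union_left Z i.2⟩,
   fun i => v ⟨i.1, Finset.mem_union_right B i.2⟩)

lemma restrictPair_injective {N : ℕ} {V : Fin N → Type*} (B Z : Finset (Fin N)) :
    Function.Injective (restrictPair (V := V) B Z) := by
  intro v w h
  funext i
  rcases Finset.mem_union.1 i.2 with hB | hZ
  · exact congrFun (congrArg Prod.fst h) ⟨i.1, hB⟩
  · exact congrFun (congrArg Prod.snd h) ⟨i.1, hZ⟩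

/-- If `X_{B ∪ Z}` determines `S` and `X_Z` is independent of `S` (in the entropy
sense), then `H(S) ≤ H(X_B | X_Z)` and consequently `H(S) ≤ H(X_B)`. -/
theorem secret_entropy_le_condEntropy_of_decoding_of_privacy
    {Ω : Type*} [Fintype Ω] {N : ℕ} (b : ℝ) (hb : 1 < b)
    (p : Ω → ℝ) (hp : ∀ ω, 0 ≤ p ω) (hp1 : ∑ ω, p ω = 1)
    {σ : Type*} [Fintype σ] [DecidableEq σ] (S : Ω → σ)
    {V : Fin N → Type*} [∀ i, Fintype (V i)] [∀ i, DecidableEq (V i)]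
    (X : ∀ i, Ω → V i)
    (B Z : Finset (Fin N)) (hBZ : Disjoint B Z)
    (hdec : condEntropy b p S (tupleOn X (B ∪ Z)) = 0)
    (hpriv : condEntropy b p S (tupleOn X Z) = entropy b p S) :
    entropy b p S ≤ condEntropy b p (tupleOn X B) (tupleOn X Z) ∧
      entropy b p S ≤ entropy b p (tupleOn X B) := by
  classical
  have key1 : entropy b p (fun ω => (tupleOn X B ω, tupleOn X Z ω)) =
      entropy b p (tupleOn X (B ∪ Z)) :=
    entropy_comp_inj (restrictPair_injective B Z) (tupleOn X (B ∪ Z))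
  have hf1 : Function.Injective
      (fun sv : σ × (∀ i : (B ∪ Z : Finset (Fin N)), V i) => (sv.1, restrictPair B Z sv.2)) := by
    intro a c h
    have h' : (a.1, restrictPair B Z a.2) = (c.1, restrictPair B Z c.2) := h
    have h1 := congrArg Prod.fst h'
    have h2 := congrArg Prod.snd h'
    exact Prod.ext_iff.2 ⟨h1, restrictPair_injective B Z h2⟩
  have key2 : entropy b p (fun ω => (S ω, (tupleOn X B ω, tupleOn X Z ω))) =
      entropy b p (fun ω => (S ω, tupleOn X (B ∪ Z) ω)) :=
    entropy_comp_inj hf1 (fun ω => (S ω, tupleOn X (B ∪ Z) ω))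
  have step1 : entropy b p (fun ω => (S ω, tupleOn X Z ω)) ≤
      entropy b p (fun ω => (S ω, (tupleOn X B ω, tupleOn X Z ω))) :=
    entropy_comp_le hb hp
      (fun sv : σ × ((∀ i : B, V i) × (∀ i : Z, V i)) => (sv.1, sv.2.2))
      (fun ω => (S ω, (tupleOn X B ω, tupleOn X Z ω)))
  have hadd := entropy_pair_le hb hp hp1 (tupleOn X B) (tupleOn X Z)
  unfold condEntropy at hdec hpriv ⊢
  constructor <;> linarith [key1, key2, step1, hadd, hdec, hpriv]
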